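/- Let G be a finite nilpotent group that has an ES-partition for a subgroup S. Then S is normal in G. -/

import Mathlib

/-- A strict `S`-partition of a group `G`: a finite collection of at least two proper
subgroups of `G` covering `G`, any two distinct members of which intersect exactly in `S`. -/
def IsStrictPartition {G : Type*} [Group G] (S : Subgroup G) (P : Finset (Subgroup G)) : Prop :=
  2 ≤ P.card ∧ (∀ H ∈ P, H ≠ ⊤) ∧ (∀ g : G, ∃ H ∈ P, g ∈ H) ∧
    ∀ H ∈ P, ∀ K ∈ P, H ≠ K → H ⊓ K = S

/-- An `ES`-partition: a strict `S`-partition all of whose components have the same order. -/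
def IsESPartition {G : Type*} [Group G] (S : Subgroup G) (P : Finset (Subgroup G)) : Prop :=
  IsStrictPartition S P ∧ ∀ H ∈ P, ∀ K ∈ P, Nat.card H = Nat.card K

/-- A group is not the union of two proper subgroups. -/
lemma not_union_of_two {G : Type*} [Group G] {A B : Subgroup G} (hA : A ≠ ⊤) (hB : B ≠ ⊤)
    (h : ∀ g : G, g ∈ A ∨ g ∈ B) : False := by
  obtain ⟨a, ha⟩ : ∃ a, a ∉ A := by
    by_contra hc; push_neg at hc; exact hA ((Subgroup.eq_top_iff' _).mpr hc)
  obtain ⟨b, hb⟩ : ∃ b, b ∉ B := by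
    by_contra hc; push_neg at hc; exact hB ((Subgroup.eq_top_iff' _).mpr hc)
  have haB : a ∈ B := (h a).resolve_left ha
  have hbA : b ∈ A := (h b).resolve_right hb
  rcases h (a * b) with hab | hab
  · exact ha (by simpa using mul_mem hab (inv_mem hbA))
  · exact hb (by simpa using mul_mem (inv_mem haB) hab)

/-- In a finite group, a proper subgroup has strictly smaller cardinality. -/
lemma card_lt_of_ne_top {G : Type*} [Group G] [Finite G] {M : Subgroup G} (hM : M ≠ ⊤) :
    Nat.card M < Nat.card G := by
  have h1 : M.index * Nat.card M = Nat.card G := Subgroup.index_mul_card M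
  have h2 : 1 < M.index := Subgroup.one_lt_index_of_ne_top hM
  have h3 : 0 < Nat.card M := Nat.card_pos
  nlinarith

/-- Key lemma: in a finite nilpotent group, a strict `S`-partition forces `S` normal. -/
lemma normal_of_strictPartition : ∀ (n : ℕ) {G : Type*} [Group G] [Finite G]
    [Group.IsNilpotent G] (S : Subgroup G) (P : Finset (Subgroup G)),
    Nat.card G ≤ n → IsStrictPartition S P → S.Normal := by
  intro n
  induction n with
  | zero =>
    intro G _ _ _ S P hn _
    have : 0 < Nat.card G := Nat.card_pos
    omega
  | succ n ih =>
    intro G _ _ _ S P hn hP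
    classical
    obtain ⟨hcard, hproper, hcover, hint⟩ := hP
    -- every component contains S
    have hSle : ∀ H ∈ P, S ≤ H := by
      intro H hH
      obtain ⟨K, hK, hne⟩ := Finset.exists_mem_ne (s := P) (by omega) H
      rw [← hint H hH K hK (Ne.symm hne)]
      exact inf_le_left
    -- every component lies under a maximal subgroup (coatom)
    have hcoatom : ∀ H ∈ P, ∃ M : Subgroup G, IsCoatom M ∧ H ≤ M := by
      intro H hH
      exact (eq_top_or_exists_le_coatom H).resolve_left (hproper H hH)
    -- if M is a maximal subgroup containing S which is not a component, then M normalizes S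
    have normM : ∀ M : Subgroup G, IsCoatom M → S ≤ M → M ∉ P →
        ∀ x ∈ M, ∀ s ∈ S, x * s * x⁻¹ ∈ S := by
      intro M hM hSM hMP
      set Q : Finset (Subgroup M) := P.image (fun H => H.subgroupOf M) with hQdef
      have hQproper : ∀ X ∈ Q, X ≠ ⊤ := by
        intro X hX
        rw [hQdef] at hX
        obtain ⟨H, hH, rfl⟩ := Finset.mem_image.mp hX
        intro htop
        have hMH : M ≤ H := Subgroup.subgroupOf_eq_top.mp htop
        rcases lt_or_eq_of_le hMH with hlt | heq
        · exact hproper H hH (hM.2 H hlt)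
        · exact hMP (heq ▸ hH)
      have hQcover : ∀ m : M, ∃ X ∈ Q, m ∈ X := by
        intro m
        obtain ⟨H, hH, hm⟩ := hcover (m : G)
        refine ⟨H.subgroupOf M, ?_, Subgroup.mem_subgroupOf.mpr hm⟩
        rw [hQdef]
        exact Finset.mem_image_of_mem _ hH
      have hQint : ∀ X ∈ Q, ∀ Y ∈ Q, X ≠ Y → X ⊓ Y = S.subgroupOf M := by
        intro X hX Y hY hXY
        rw [hQdef] at hX hY
        obtain ⟨H, hH, rfl⟩ := Finset.mem_image.mp hX
        obtain ⟨K, hK, rfl⟩ := Finset.mem_image.mp hY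
        have hHK : H ≠ K := by rintro rfl; exact hXY rfl
        rw [Subgroup.subgroupOf, Subgroup.subgroupOf, ← Subgroup.comap_inf,
          hint H hH K hK hHK]
        rfl
      have hQ2 : 2 ≤ Q.card := by
        by_contra hc
        push_neg at hc
        obtain ⟨X, hX⟩ := hQcover 1
        have hone : Q.card = 1 := le_antisymm (by omega)
          (Finset.card_pos.mpr ⟨X, hX.1⟩)
        obtain ⟨Y, hY⟩ := Finset.card_eq_one.mp hone
        have : Y = ⊤ := by
          rw [Subgroup.eq_top_iff']
          intro m
          obtain ⟨Z, hZ, hm⟩ := hQcover m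
          rw [hY, Finset.mem_singleton] at hZ
          exact hZ ▸ hm
        exact hQproper Y (by rw [hY]; exact Finset.mem_singleton_self Y) this
      have hQP : IsStrictPartition (S.subgroupOf M) Q := ⟨hQ2, hQproper, hQcover, hQint⟩
      have hcardM : Nat.card M ≤ n := by
        have := card_lt_of_ne_top hM.1
        omega
      have hnormal : (S.subgroupOf M).Normal := ih (S.subgroupOf M) Q hcardM hQP
      intro x hx s hs
      have hsM : s ∈ M := hSM hs
      have := hnormal.conj_mem ⟨s, hsM⟩ (Subgroup.mem_subgroupOf.mpr hs) ⟨x, hx⟩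
      rw [Subgroup.mem_subgroupOf] at this
      simpa using this
    -- finisher: two distinct maximal components
    have finC : ∀ M₁ M₂ : Subgroup G, M₁ ∈ P → M₂ ∈ P → M₁ ≠ M₂ → IsCoatom M₁ → IsCoatom M₂ →
        S.Normal := by
      intro M₁ M₂ h1P h2P hne hco1 hco2
      have hnc : NormalizerCondition G := normalizerCondition_of_isNilpotent
      have hn1 : M₁.Normal := Subgroup.NormalizerCondition.normal_of_coatom M₁ hnc hco1
      have hn2 : M₂.Normal := Subgroup.NormalizerCondition.normal_of_coatom M₂ hnc hco2
      have hS : M₁ ⊓ M₂ = S := hint M₁ h1P M₂ h2P hne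
      refine ⟨fun s hs g => ?_⟩
      rw [← hS] at hs ⊢
      exact ⟨hn1.conj_mem _ hs.1 g, hn2.conj_mem _ hs.2 g⟩
    -- finisher: two distinct maximal non-components containing S
    have finNC : ∀ M₁ M₂ : Subgroup G, IsCoatom M₁ → IsCoatom M₂ → S ≤ M₁ → S ≤ M₂ →
        M₁ ∉ P → M₂ ∉ P → M₁ ≠ M₂ → S.Normal := by
      intro M₁ M₂ hco1 hco2 hS1 hS2 h1P h2P hne
      have h1 := normM M₁ hco1 hS1 h1P
      have h2 := normM M₂ hco2 hS2 h2P
      have hnorm : ∀ M : Subgroup G, (∀ x ∈ M, ∀ s ∈ S, x * s * x⁻¹ ∈ S) →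
          M ≤ Subgroup.normalizer (S : Set G) := by
        intro M hM x hx
        rw [Subgroup.mem_normalizer_iff]
        intro h
        constructor
        · intro hh; exact hM x hx h hh
        · intro hh
          have := hM x⁻¹ (inv_mem hx) _ hh
          simpa [mul_assoc] using this
      have hM1le : M₁ ≤ Subgroup.normalizer (S : Set G) := hnorm M₁ h1
      have hM2le : M₂ ≤ Subgroup.normalizer (S : Set G) := hnorm M₂ h2
      obtain ⟨x, hx2, hx1⟩ : ∃ x ∈ M₂, x ∉ M₁ := by
        rw [← SetLike.not_le_iff_exists]
        intro hle
        rcases lt_or_eq_of_le hle with hlt | heq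
        · exact hco1.1 (hco2.2 _ hlt)
        · exact hne heq.symm
      have hlt : M₁ < Subgroup.normalizer (S : Set G) :=
        lt_of_le_of_ne hM1le (fun h => hx1 (h ▸ hM2le hx2))
      exact Subgroup.normalizer_eq_top_iff.mp (hco1.2 _ hlt)
    -- main casework
    obtain ⟨H₀, hH₀⟩ : P.Nonempty := Finset.card_pos.mp (by omega)
    obtain ⟨M₁, hco1, hle1⟩ := hcoatom H₀ hH₀
    have hS1 : S ≤ M₁ := (hSle H₀ hH₀).trans hle1
    by_cases hall : ∀ H ∈ P, H ≤ M₁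
    · exfalso
      apply hco1.1
      rw [Subgroup.eq_top_iff']
      intro g
      obtain ⟨H, hH, hg⟩ := hcover g
      exact hall H hH hg
    · push_neg at hall
      obtain ⟨H₁, hH₁, hnle⟩ := hall
      obtain ⟨M₂, hco2, hle2⟩ := hcoatom H₁ hH₁
      have hS2 : S ≤ M₂ := (hSle H₁ hH₁).trans hle2
      have hne12 : M₁ ≠ M₂ := fun h => hnle (h ▸ hle2)
      -- a third maximal subgroup, distinct from both, when needed
      have third : M₁ ∈ P ∨ M₂ ∈ P → (∃ M₃ : Subgroup G, IsCoatom M₃ ∧ S ≤ M₃ ∧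
          M₃ ≠ M₁ ∧ M₃ ≠ M₂) ∨ S.Normal := by
        intro _
        by_cases hall2 : ∀ H ∈ P, H ≤ M₁ ∨ H ≤ M₂
        · exfalso
          refine not_union_of_two hco1.1 hco2.1 (fun g => ?_)
          obtain ⟨H, hH, hg⟩ := hcover g
          rcases hall2 H hH with h | h
          · exact Or.inl (h hg)
          · exact Or.inr (h hg)
        · push_neg at hall2
          obtain ⟨H₂, hH₂, hn1, hn2⟩ := hall2
          obtain ⟨M₃, hco3, hle3⟩ := hcoatom H₂ hH₂
          refine Or.inl ⟨M₃, hco3, (hSle H₂ hH₂).trans hle3, ?_, ?_⟩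
          · intro h; exact hn1 (h ▸ hle3)
          · intro h; exact hn2 (h ▸ hle3)
      by_cases h1P : M₁ ∈ P <;> by_cases h2P : M₂ ∈ P
      · exact finC M₁ M₂ h1P h2P hne12 hco1 hco2
      · rcases third (Or.inl h1P) with ⟨M₃, hco3, hS3, hne31, hne32⟩ | hdone
        · by_cases h3P : M₃ ∈ P
          · exact finC M₁ M₃ h1P h3P (Ne.symm hne31) hco1 hco3
          · exact finNC M₂ M₃ hco2 hco3 hS2 hS3 h2P h3P (Ne.symm hne32)
        · exact hdone
      · rcases third (Or.inr h2P) with ⟨M₃, hco3, hS3, hne31, hne32⟩ | hdone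
        · by_cases h3P : M₃ ∈ P
          · exact finC M₂ M₃ h2P h3P (Ne.symm hne32) hco2 hco3
          · exact finNC M₁ M₃ hco1 hco3 hS1 hS3 h1P h3P (Ne.symm hne31)
        · exact hdone
      · exact finNC M₁ M₂ hco1 hco2 hS1 hS2 h1P h2P hne12

theorem normal_of_ESPartition_of_nilpotent {G : Type*} [Group G] [Finite G]
    [Group.IsNilpotent G] (S : Subgroup G) (P : Finset (Subgroup G))
    (hP : IsESPartition S P) : S.Normal :=
  normal_of_strictPartition (Nat.card G) S P le_rfl hP.1
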